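/- Let T be a finite family of arcs and suppose x ∈ V lies in Int(g) for no g ∈ T. Then the linear order ⪯ on V = ZMod n defined by x + 1 ≺ x + 2 ≺ ⋯ ≺ x + n (so that x = x + n is the greatest element of V) is admissible for every arc of T; in particular q(T) ≥ 1. -/
import Mathlib


/-- The denouement of an arc `(h, ℓ)`: the vertex `h + (ℓ - 1)` in `ZMod n`. -/
def arcDen {n : ℕ} (g : ZMod n × ℕ) : ZMod n := g.1 + ((g.2 - 1 : ℕ) : ZMod n)

/-- The interior of an arc `(h, ℓ)`: the set `{h + j : 1 ≤ j ≤ ℓ - 2}` in `ZMod n`. -/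
def arcInt {n : ℕ} (g : ZMod n × ℕ) : Finset (ZMod n) :=
  (Finset.Icc 1 (g.2 - 2)).image (fun j : ℕ => g.1 + (j : ZMod n))

/-- The hood of an arc `(h, ℓ)`: the set `{h + j : 0 ≤ j ≤ ℓ - 1}` in `ZMod n`. -/
def arcHood {n : ℕ} (g : ZMod n × ℕ) : Finset (ZMod n) :=
  (Finset.range g.2).image (fun j : ℕ => g.1 + (j : ZMod n))

/-- A linear order on `ZMod n`, encoded by its ranking equivalence `σ : ZMod n ≃ Fin n`
(`v ≺ w` iff `σ v < σ w`), is admissible for the arc `g` if every interior vertex of `g`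
lies strictly below the hook or strictly below the denouement of `g`. -/
def Admissible {n : ℕ} (σ : ZMod n ≃ Fin n) (g : ZMod n × ℕ) : Prop :=
  ∀ v ∈ arcInt g, σ v < σ g.1 ∨ σ v < σ (arcDen g)

/-- `qCount n T` is the number of linear orders on `ZMod n` (encoded by ranking
equivalences `ZMod n ≃ Fin n`) admissible for every arc of `T`. -/
noncomputable def qCount (n : ℕ) (T : Finset (ZMod n × ℕ)) : ℕ :=
  Nat.card {σ : ZMod n ≃ Fin n // ∀ g ∈ T, Admissible σ g}

/-- `qCountAt n x T` is the number of linear orders on `ZMod n` admissible for every arc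
of `T` and whose greatest element is `x`. -/
noncomputable def qCountAt (n : ℕ) (x : ZMod n) (T : Finset (ZMod n × ℕ)) : ℕ :=
  Nat.card {σ : ZMod n ≃ Fin n //
    (∀ g ∈ T, Admissible σ g) ∧ ∀ v : ZMod n, σ v ≤ σ x}

/-- `delAt x T` is the subfamily of arcs of `T` for which `x` is neither the hook nor
the denouement. -/
def delAt {n : ℕ} (x : ZMod n) (T : Finset (ZMod n × ℕ)) : Finset (ZMod n × ℕ) :=
  T.filter fun g => g.1 ≠ x ∧ arcDen g ≠ x

/-- The arc `g'` is a subpath of the arc `g` if there is `j ≥ 0` with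
`h' = h + j` in `ZMod n` and `j + ℓ' ≤ ℓ`. -/
def Subpath {n : ℕ} (g' g : ZMod n × ℕ) : Prop :=
  ∃ j : ℕ, g'.1 = g.1 + (j : ZMod n) ∧ j + g'.2 ≤ g.2

/-- if `x ∈ ZMod n` lies in the interior of no arc of `T`, then the linear
order `x + 1 ≺ x + 2 ≺ ⋯ ≺ x + n` (i.e. the ranking `σ` with `σ (x + i + 1) = i` for
all `i : Fin n`, so that `x` is the greatest element) is admissible for every arc of
`T`; in particular `q(T) ≥ 1`. -/
theorem reverse_order_admissible (n : ℕ) (hn : 2 ≤ n) (T : Finset (ZMod n × ℕ))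
    (hT : ∀ g ∈ T, 3 ≤ g.2) (x : ZMod n) (hx : ∀ g ∈ T, x ∉ arcInt g)
    (σ : ZMod n ≃ Fin n) (hσ : ∀ i : Fin n, σ (x + ((i : ℕ) : ZMod n) + 1) = i) :
    (∀ g ∈ T, Admissible σ g) ∧ 1 ≤ qCount n T := by
  haveI : NeZero n := ⟨by omega⟩
  -- rank formula
  have hrank : ∀ v : ZMod n, (σ v : ℕ) = (v - x - 1).val := by
    intro v
    have h1 : x + (((v - x - 1).val : ℕ) : ZMod n) + 1 = v := by
      rw [ZMod.natCast_val, ZMod.cast_id]; ring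
    have h2 := hσ ⟨(v - x - 1).val, ZMod.val_lt _⟩
    simp only [Fin.val_mk] at h2
    rw [h1] at h2
    rw [h2]
  have main : ∀ g ∈ T, Admissible σ g := by
    intro g hg v hv
    obtain ⟨j, hj, hjv⟩ := Finset.mem_image.mp hv
    rw [Finset.mem_Icc] at hj
    have hl := hT g hg
    have hxg := hx g hg
    set a := (g.1 - x - 1).val with ha
    have halt : a < n := ZMod.val_lt _
    have haval : ((a : ℕ) : ZMod n) = g.1 - x - 1 := by
      rw [ha, ZMod.natCast_val, ZMod.cast_id]
    by_cases hcase : a = n - 1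
    · -- hook is x, so σ v < σ g.1
      left
      have hgx : g.1 = x := by
        have : ((a : ℕ) : ZMod n) = -1 := by
          rw [hcase]
          have : ((n - 1 : ℕ) : ZMod n) = (n : ZMod n) - 1 := by
            push_cast [Nat.cast_sub (by omega : 1 ≤ n)]; ring
          rw [this, ZMod.natCast_self]; ring
        have := haval.symm.trans this
        linear_combination this
      have hvx : v ≠ x := fun h => hxg (h ▸ hv)
      rw [Fin.lt_def, hrank, hrank, hgx]
      have hx1 : (x - x - 1 : ZMod n).val = n - 1 := by
        have h0 : (x - x - 1 : ZMod n) = ((n - 1 : ℕ) : ZMod n) := by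
          have h' : ((n - 1 : ℕ) : ZMod n) = (n : ZMod n) - 1 := by
            push_cast [Nat.cast_sub (by omega : 1 ≤ n)]; ring
          rw [h', ZMod.natCast_self]; ring
        rw [h0, ZMod.val_natCast_of_lt (by omega)]
      rw [hx1]
      have hvlt : (v - x - 1).val < n := ZMod.val_lt _
      rcases Nat.lt_or_ge ((v - x - 1).val) (n - 1) with h | h
      · exact h
      · exfalso
        have heq : (v - x - 1).val = n - 1 := by omega
        apply hvx
        have : ((n - 1 : ℕ) : ZMod n) = -1 := by
          have h' : ((n - 1 : ℕ) : ZMod n) = (n : ZMod n) - 1 := by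
            push_cast [Nat.cast_sub (by omega : 1 ≤ n)]; ring
          rw [h', ZMod.natCast_self]; ring
        have h3 : (((v - x - 1).val : ℕ) : ZMod n) = v - x - 1 := by
          rw [ZMod.natCast_val, ZMod.cast_id]
        have h2 : v - x - 1 = -1 := by
          rw [← h3, heq, ‹((n - 1 : ℕ) : ZMod n) = -1›]
        linear_combination h2
    · -- a < n - 1
      have haln : a + g.2 ≤ n := by
        by_contra hcon
        apply hxg
        set j0 := n - 1 - a with hj0
        have hj0b : 1 ≤ j0 ∧ j0 ≤ g.2 - 2 := by omega
        refine Finset.mem_image.mpr ⟨j0, Finset.mem_Icc.mpr hj0b, ?_⟩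
        have hsum : ((a : ℕ) : ZMod n) + ((j0 : ℕ) : ZMod n) = -1 := by
          rw [← Nat.cast_add]
          have : a + j0 = n - 1 := by omega
          rw [this]
          have h' : ((n - 1 : ℕ) : ZMod n) = (n : ZMod n) - 1 := by
            push_cast [Nat.cast_sub (by omega : 1 ≤ n)]; ring
          rw [h', ZMod.natCast_self]; ring
        have : g.1 = x + 1 + ((a : ℕ) : ZMod n) := by linear_combination -haval
        rw [this]
        linear_combination hsum
      right
      rw [Fin.lt_def, hrank, hrank]
      have hg1 : g.1 = x + 1 + ((a : ℕ) : ZMod n) := by linear_combination -haval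
      have hv1 : (v - x - 1 : ZMod n) = ((a + j : ℕ) : ZMod n) := by
        rw [← hjv, hg1]; push_cast; ring
      have hd1 : (arcDen g - x - 1 : ZMod n) = ((a + (g.2 - 1) : ℕ) : ZMod n) := by
        rw [arcDen, hg1]; push_cast; ring
      rw [hv1, hd1, ZMod.val_natCast_of_lt (by omega), ZMod.val_natCast_of_lt (by omega)]
      omega
  refine ⟨main, ?_⟩
  haveI : Nonempty {σ' : ZMod n ≃ Fin n // ∀ g ∈ T, Admissible σ' g} := ⟨⟨σ, main⟩⟩
  have : 0 < qCount n T := Nat.card_pos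
  omega
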